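/- (Lemma 3) Let the sequences (u(k), v(k), v̂(k), λ(k)) be generated by Algorithm 1 with symmetric step sizes η_i^j = η_j^i = η_ij ∈ (0, 1/4), and let (u*, v*, λ*) be a saddle point of the augmented Lagrangian L. Define λ̃_i^j(k) = λ_i^j(k) + (1 − η_ij)( v_i^j(k) + v_j^i(k) ) and V(k) = ∑_{i∈N} ∑_{j∈N_i} η_ij^{−1} ( ‖v_i^j(k) − v*_i^j‖² + (1/2) ‖λ̃_i^j(k) − λ*_i^j‖² ). Then the sequence {V(k)} is monotonically non-increasing and, for every k, V(k+1) − V(k) ≤ − ∑_{i∈N} m_i ‖u_i(k+1) − u*_i‖² − ∑_{i∈N} ∑_{j∈N_i} (3/2 − η_ij) ‖v̂_i^j(k) − v_i^j(k)‖² − ∑_{i∈N} ∑_{j∈N_i} ((η_ij − (2η_ij)²)/2) ‖v̂_i^j(k) + v̂_j^i(k)‖². -/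

import Mathlib

open scoped RealInnerProductSpace BigOperators

/-- The augmented Lagrangian. -/
noncomputable def augLagrangian {ι : Type*} [Fintype ι] {ns : ℕ} {n : ι → ℕ}
    (Nbr : ι → ι → Prop) [DecidableRel Nbr]
    (fp : ∀ i, EuclideanSpace ℝ (Fin (n i)) → ℝ)
    (fs : ι → (ι → EuclideanSpace ℝ (Fin ns)) → ℝ)
    (u : ∀ i, EuclideanSpace ℝ (Fin (n i)))
    (v lam : ι → ι → EuclideanSpace ℝ (Fin ns)) : ℝ :=
  ∑ i, (fp i (u i) + fs i (v i) +
    ∑ j ∈ Finset.univ.filter (fun j => Nbr i j),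
      (⟪lam i j, v i j + v j i⟫ + ‖v i j + v j i‖ ^ 2))

/-- `(u*, v*, λ*)` is a saddle point of the augmented Lagrangian. -/
def IsSaddlePoint {ι : Type*} [Fintype ι] {ns : ℕ} {n : ι → ℕ}
    (Nbr : ι → ι → Prop) [DecidableRel Nbr]
    (fp : ∀ i, EuclideanSpace ℝ (Fin (n i)) → ℝ)
    (fs : ι → (ι → EuclideanSpace ℝ (Fin ns)) → ℝ)
    (C : ∀ i, Set (EuclideanSpace ℝ (Fin (n i)) × (ι → EuclideanSpace ℝ (Fin ns))))
    (ustar : ∀ i, EuclideanSpace ℝ (Fin (n i)))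
    (vstar lamstar : ι → ι → EuclideanSpace ℝ (Fin ns)) : Prop :=
  (∀ i, (ustar i, vstar i) ∈ C i) ∧
  (∀ lam : ι → ι → EuclideanSpace ℝ (Fin ns),
    augLagrangian Nbr fp fs ustar vstar lam ≤ augLagrangian Nbr fp fs ustar vstar lamstar) ∧
  (∀ (u : ∀ i, EuclideanSpace ℝ (Fin (n i))) (v : ι → ι → EuclideanSpace ℝ (Fin ns)),
    (∀ i, (u i, v i) ∈ C i) →
    augLagrangian Nbr fp fs ustar vstar lamstar ≤ augLagrangian Nbr fp fs u v lamstar)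

open scoped RealInnerProductSpace BigOperators

section Helpers
variable {E : Type*} [NormedAddCommGroup E] [InnerProductSpace ℝ E]

lemma adal_norm_add_smul (x y : E) (c : ℝ) :
    ‖x + c • y‖^2 = ‖x‖^2 + 2*c*⟪y, x⟫ + c^2 * ‖y‖^2 := by
  rw [← real_inner_self_eq_norm_sq, ← real_inner_self_eq_norm_sq, ← real_inner_self_eq_norm_sq]
  simp [inner_add_left, inner_add_right, real_inner_smul_left, real_inner_smul_right,
    real_inner_comm, -inner_self_eq_norm_sq_to_K]
  ring

lemma adal_comb_term (c a b w : E) (t : ℝ) :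
    ⟪c, t • a + (1-t) • b⟫ + ‖t • a + (1-t) • b + w‖^2
      = t*(⟪c, a⟫ + ‖a + w‖^2) + (1-t)*(⟪c, b⟫ + ‖b + w‖^2) - t*(1-t)*‖a - b‖^2 := by
  rw [← real_inner_self_eq_norm_sq, ← real_inner_self_eq_norm_sq, ← real_inner_self_eq_norm_sq,
    ← real_inner_self_eq_norm_sq]
  simp [inner_add_left, inner_add_right, inner_sub_left, inner_sub_right,
    real_inner_smul_left, real_inner_smul_right, real_inner_comm, -inner_self_eq_norm_sq_to_K]
  ring

lemma adal_edge_id (a b ah bh astar bstar : E) (η : ℝ) (h : astar + bstar = 0) :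
    (2*⟪ah - a, a - astar⟫ + η*‖ah - a‖^2 + (1-η)*⟪ah + bh, a + b⟫ + (η/2)*‖ah + bh‖^2
      - (‖ah - astar‖^2 + ‖ah + b‖^2 - ‖astar + b‖^2)
      + (3/2 - η)*‖ah - a‖^2 + ((η - (2*η)^2)/2)*‖ah + bh‖^2)
    + (2*⟪bh - b, b - bstar⟫ + η*‖bh - b‖^2 + (1-η)*⟪bh + ah, b + a⟫ + (η/2)*‖bh + ah‖^2
      - (‖bh - bstar‖^2 + ‖bh + a‖^2 - ‖bstar + a‖^2)
      + (3/2 - η)*‖bh - b‖^2 + ((η - (2*η)^2)/2)*‖bh + ah‖^2)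
    = -(1/2)*‖(ah - a) - (2*η) • (ah + bh)‖^2 - (1/2)*‖(bh - b) - (2*η) • (ah + bh)‖^2 := by
  have hb : bstar = -astar := eq_neg_of_add_eq_zero_right h
  subst hb
  simp only [← real_inner_self_eq_norm_sq]
  simp [inner_add_left, inner_add_right, inner_sub_left, inner_sub_right, inner_neg_left,
    inner_neg_right, real_inner_smul_left, real_inner_smul_right, real_inner_comm,
    -inner_self_eq_norm_sq_to_K]
  ring

lemma adal_le_of_scaled (Q D : ℝ) (hQ : 0 ≤ Q)
    (h : ∀ t : ℝ, 0 < t → t ≤ 1 → (1-t)*Q ≤ D) : Q ≤ D := by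
  refine le_of_forall_pos_le_add fun ε hε => ?_
  have hQ1 : (0:ℝ) < Q + 1 := by linarith
  have ht0 : 0 < min 1 (ε/(Q+1)) := lt_min one_pos (div_pos hε hQ1)
  have ht1 : min 1 (ε/(Q+1)) ≤ 1 := min_le_left _ _
  have h1 := h _ ht0 ht1
  have h2 : min 1 (ε/(Q+1)) * Q ≤ ε := by
    have h3 : min 1 (ε/(Q+1)) ≤ ε/(Q+1) := min_le_right _ _
    have h4 : min 1 (ε/(Q+1)) * Q ≤ (ε/(Q+1))*Q := mul_le_mul_of_nonneg_right h3 hQ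
    have h5 : (ε/(Q+1))*Q ≤ ε := by
      rw [div_mul_eq_mul_div, div_le_iff₀ hQ1]; nlinarith
    linarith
  nlinarith

lemma adal_swap_sum {ι : Type*} [Fintype ι] (Nbr : ι → ι → Prop) [DecidableRel Nbr]
    (hsymm : ∀ i j, Nbr i j ↔ Nbr j i) (g : ι → ι → ℝ) :
    ∑ i, ∑ j ∈ Finset.univ.filter (fun j => Nbr i j), g i j
      = ∑ i, ∑ j ∈ Finset.univ.filter (fun j => Nbr i j), g j i := by
  simp only [Finset.sum_filter]
  rw [Finset.sum_comm]
  refine Finset.sum_congr rfl fun i _ => Finset.sum_congr rfl fun j _ => ?_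
  by_cases h : Nbr i j
  · rw [if_pos h, if_pos ((hsymm i j).mp h)]
  · rw [if_neg h, if_neg (fun h' => h ((hsymm j i).mp h'))]

end Helpers

set_option maxHeartbeats 2000000 in
/-- Lemma 3: along Algorithm 1 with symmetric step sizes `η_ij ∈ (0, 1/4)` the Lyapunov
function `V(k) = ∑ i ∑ {j ∈ N_i} η_ij⁻¹ ( ‖v_i^j(k) − v*_i^j‖² + (1/2) ‖λ̃_i^j(k) − λ*_i^j‖² )`
is monotonically non-increasing and satisfies the drift inequality. -/
theorem adal_lemma_three {ι : Type*} [Fintype ι] {ns : ℕ} {n : ι → ℕ}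
    (Nbr : ι → ι → Prop) [DecidableRel Nbr]
    (hsymm : ∀ i j, Nbr i j ↔ Nbr j i) (hirr : ∀ i, ¬ Nbr i i)
    (fp : ∀ i, EuclideanSpace ℝ (Fin (n i)) → ℝ)
    (fs : ι → (ι → EuclideanSpace ℝ (Fin ns)) → ℝ)
    (C : ∀ i, Set (EuclideanSpace ℝ (Fin (n i)) × (ι → EuclideanSpace ℝ (Fin ns))))
    (m : ι → ℝ) (hm : ∀ i, 0 < m i)
    (hfp_diff : ∀ i, Differentiable ℝ (fp i))
    (hfp_sc : ∀ i, StrongConvexOn Set.univ (m i) (fp i))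
    (hfs_diff : ∀ i, Differentiable ℝ (fs i))
    (hfs_cvx : ∀ i, ConvexOn ℝ Set.univ (fs i))
    (hC_ne : ∀ i, (C i).Nonempty) (hC_cpt : ∀ i, IsCompact (C i))
    (hC_cvx : ∀ i, Convex ℝ (C i))
    -- symmetric step sizes in (0, 1/4)
    (η : ι → ι → ℝ) (hηsymm : ∀ i j, Nbr i j → η i j = η j i)
    (hη : ∀ i j, Nbr i j → η i j ∈ Set.Ioo (0 : ℝ) (1 / 4))
    -- sequences generated by Algorithm 1
    (u : ℕ → ∀ i, EuclideanSpace ℝ (Fin (n i)))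
    (v vhat lam : ℕ → ι → ι → EuclideanSpace ℝ (Fin ns))
    (hmin : ∀ k i, (u (k + 1) i, vhat k i) ∈ C i ∧
      ∀ p ∈ C i,
        fp i (u (k + 1) i) + fs i (vhat k i) +
            ∑ j ∈ Finset.univ.filter (fun j => Nbr i j),
              (⟪lam k i j + lam k j i, vhat k i j⟫ + ‖vhat k i j + v k j i‖ ^ 2)
          ≤ fp i p.1 + fs i p.2 +
            ∑ j ∈ Finset.univ.filter (fun j => Nbr i j),
              (⟪lam k i j + lam k j i, p.2 j⟫ + ‖p.2 j + v k j i‖ ^ 2))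
    (hv_up : ∀ k i j, Nbr i j →
      v (k + 1) i j = η i j • vhat k i j + (1 - η i j) • v k i j)
    (hlam_up : ∀ k i j, Nbr i j →
      lam (k + 1) i j = lam k i j + η i j • (v (k + 1) i j + v (k + 1) j i))
    -- saddle point
    (ustar : ∀ i, EuclideanSpace ℝ (Fin (n i)))
    (vstar lamstar : ι → ι → EuclideanSpace ℝ (Fin ns))
    (hsaddle : IsSaddlePoint Nbr fp fs C ustar vstar lamstar)
    -- auxiliary multipliers and Lyapunov function
    (lamTilde : ℕ → ι → ι → EuclideanSpace ℝ (Fin ns))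
    (hlamTilde : ∀ k i j, Nbr i j →
      lamTilde k i j = lam k i j + (1 - η i j) • (v k i j + v k j i))
    (V : ℕ → ℝ)
    (hV : ∀ k, V k = ∑ i, ∑ j ∈ Finset.univ.filter (fun j => Nbr i j),
      (η i j)⁻¹ * (‖v k i j - vstar i j‖ ^ 2 + (1 / 2) * ‖lamTilde k i j - lamstar i j‖ ^ 2)) :
    (∀ k, V (k + 1) ≤ V k) ∧
    ∀ k, V (k + 1) - V k ≤
      - (∑ i, m i * ‖u (k + 1) i - ustar i‖ ^ 2)
      - ∑ i, ∑ j ∈ Finset.univ.filter (fun j => Nbr i j),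
          (3 / 2 - η i j) * ‖vhat k i j - v k i j‖ ^ 2
      - ∑ i, ∑ j ∈ Finset.univ.filter (fun j => Nbr i j),
          ((η i j - (2 * η i j) ^ 2) / 2) * ‖vhat k i j + vhat k j i‖ ^ 2  := by
  classical
  obtain ⟨hfeas, hdual, hprimal⟩ := hsaddle
  -- Step 0 : the saddle point is primal feasible on each edge
  have hstar : ∀ i j, Nbr i j → vstar i j + vstar j i = 0 := by
    have h := hdual (fun i j => lamstar i j + (vstar i j + vstar j i))
    unfold augLagrangian at h
    have e1 : ∀ i : ι, (fp i (ustar i) + fs i (vstar i) +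
        ∑ j ∈ Finset.univ.filter (fun j => Nbr i j),
          (⟪lamstar i j + (vstar i j + vstar j i), vstar i j + vstar j i⟫
            + ‖vstar i j + vstar j i‖ ^ 2))
        = (fp i (ustar i) + fs i (vstar i) +
            ∑ j ∈ Finset.univ.filter (fun j => Nbr i j),
              (⟪lamstar i j, vstar i j + vstar j i⟫ + ‖vstar i j + vstar j i‖ ^ 2))
          + ∑ j ∈ Finset.univ.filter (fun j => Nbr i j), ‖vstar i j + vstar j i‖ ^ 2 := by
      intro i
      have e0 : ∀ j ∈ Finset.univ.filter (fun j => Nbr i j),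
          (⟪lamstar i j + (vstar i j + vstar j i), vstar i j + vstar j i⟫
            + ‖vstar i j + vstar j i‖ ^ 2)
          = (⟪lamstar i j, vstar i j + vstar j i⟫ + ‖vstar i j + vstar j i‖ ^ 2)
            + ‖vstar i j + vstar j i‖ ^ 2 := by
        intro j _
        rw [inner_add_left, real_inner_self_eq_norm_sq]
      rw [Finset.sum_congr rfl e0, Finset.sum_add_distrib]
      ring
    rw [Finset.sum_congr rfl (fun i _ => e1 i), Finset.sum_add_distrib] at h
    have h3 : (∑ i, ∑ j ∈ Finset.univ.filter (fun j => Nbr i j),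
        ‖vstar i j + vstar j i‖ ^ 2) = 0 := by
      refine le_antisymm (by linarith)
        (Finset.sum_nonneg fun i _ => Finset.sum_nonneg fun j _ => by positivity)
    intro i j hij
    have h4 := (Finset.sum_eq_zero_iff_of_nonneg
      (fun i _ => Finset.sum_nonneg fun j _ => by positivity)).mp h3 i (Finset.mem_univ i)
    have h5 := (Finset.sum_eq_zero_iff_of_nonneg (fun j _ => by positivity)).mp h4 j
      (Finset.mem_filter.mpr ⟨Finset.mem_univ j, hij⟩)
    have h6 : ‖vstar i j + vstar j i‖ = 0 := by
      have := pow_eq_zero_iff (n := 2) (by norm_num) |>.mp h5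
      exact this
    exact norm_eq_zero.mp h6
  -- the main drift bound
  have key : ∀ k, V (k + 1) - V k ≤
      - (∑ i, m i * ‖u (k + 1) i - ustar i‖ ^ 2)
      - ∑ i, ∑ j ∈ Finset.univ.filter (fun j => Nbr i j),
          (3 / 2 - η i j) * ‖vhat k i j - v k i j‖ ^ 2
      - ∑ i, ∑ j ∈ Finset.univ.filter (fun j => Nbr i j),
          ((η i j - (2 * η i j) ^ 2) / 2) * ‖vhat k i j + vhat k j i‖ ^ 2 := by
    intro k
    -- Step 1: per-agent strong-convexity inequality at the minimizer
    have hA : ∀ i : ι,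
        (m i / 2) * ‖u (k+1) i - ustar i‖ ^ 2
          + ∑ j ∈ Finset.univ.filter (fun j => Nbr i j), ‖vhat k i j - vstar i j‖ ^ 2
        ≤ (fp i (ustar i) + fs i (vstar i)
            + ∑ j ∈ Finset.univ.filter (fun j => Nbr i j),
                (⟪lam k i j + lam k j i, vstar i j⟫ + ‖vstar i j + v k j i‖ ^ 2))
          - (fp i (u (k+1) i) + fs i (vhat k i)
            + ∑ j ∈ Finset.univ.filter (fun j => Nbr i j),
                (⟪lam k i j + lam k j i, vhat k i j⟫ + ‖vhat k i j + v k j i‖ ^ 2)) := by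
      intro i
      refine adal_le_of_scaled _ _ ?_ ?_
      · have hq1 : 0 ≤ (m i / 2) * ‖u (k+1) i - ustar i‖ ^ 2 :=
          mul_nonneg (by linarith [hm i]) (by positivity)
        have hq2 : 0 ≤ ∑ j ∈ Finset.univ.filter (fun j => Nbr i j),
            ‖vhat k i j - vstar i j‖ ^ 2 :=
          Finset.sum_nonneg fun j _ => by positivity
        linarith
      intro t ht0 ht1
      have htt : (0:ℝ) ≤ 1 - t := by linarith
      obtain ⟨hmem0, hmin2⟩ := hmin k i
      have hmemt := hC_cvx i (hfeas i) hmem0 ht0.le htt (by ring)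
      have hle := hmin2 _ hmemt
      have hcomp1 : (t • (ustar i, vstar i) + (1 - t) • (u (k+1) i, vhat k i)).1
          = t • ustar i + (1 - t) • u (k+1) i := rfl
      have hcomp2 : (t • (ustar i, vstar i) + (1 - t) • (u (k+1) i, vhat k i)).2
          = t • vstar i + (1 - t) • vhat k i := rfl
      rw [hcomp1, hcomp2] at hle
      have h1 := (hfp_sc i).2 (Set.mem_univ (ustar i)) (Set.mem_univ (u (k+1) i))
        ht0.le htt (by ring)
      have h2 := (hfs_cvx i).2 (Set.mem_univ (vstar i)) (Set.mem_univ (vhat k i))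
        ht0.le htt (by ring)
      simp only [smul_eq_mul] at h1 h2
      have h3 : ∑ j ∈ Finset.univ.filter (fun j => Nbr i j),
            (⟪lam k i j + lam k j i, (t • vstar i + (1 - t) • vhat k i) j⟫
              + ‖(t • vstar i + (1 - t) • vhat k i) j + v k j i‖ ^ 2)
          = t * (∑ j ∈ Finset.univ.filter (fun j => Nbr i j),
                (⟪lam k i j + lam k j i, vstar i j⟫ + ‖vstar i j + v k j i‖ ^ 2))
            + (1 - t) * (∑ j ∈ Finset.univ.filter (fun j => Nbr i j),
                (⟪lam k i j + lam k j i, vhat k i j⟫ + ‖vhat k i j + v k j i‖ ^ 2))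
            - t * (1 - t) * ∑ j ∈ Finset.univ.filter (fun j => Nbr i j),
                ‖vstar i j - vhat k i j‖ ^ 2 := by
        rw [Finset.mul_sum, Finset.mul_sum, Finset.mul_sum, ← Finset.sum_add_distrib,
          ← Finset.sum_sub_distrib]
        refine Finset.sum_congr rfl fun j _ => ?_
        have hpt : (t • vstar i + (1 - t) • vhat k i) j
            = t • vstar i j + (1 - t) • vhat k i j := rfl
        rw [hpt, adal_comb_term]
      rw [h3] at hle
      have hns : ‖u (k+1) i - ustar i‖ = ‖ustar i - u (k+1) i‖ := norm_sub_rev _ _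
      have hZZ : ∑ j ∈ Finset.univ.filter (fun j => Nbr i j), ‖vhat k i j - vstar i j‖ ^ 2
          = ∑ j ∈ Finset.univ.filter (fun j => Nbr i j), ‖vstar i j - vhat k i j‖ ^ 2 :=
        Finset.sum_congr rfl fun j _ => by rw [norm_sub_rev]
      rw [hns, hZZ]
      have h6 : t * ((1-t) * ((m i / 2) * ‖ustar i - u (k+1) i‖ ^ 2
            + ∑ j ∈ Finset.univ.filter (fun j => Nbr i j), ‖vstar i j - vhat k i j‖ ^ 2))
          ≤ t * ((fp i (ustar i) + fs i (vstar i)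
            + ∑ j ∈ Finset.univ.filter (fun j => Nbr i j),
                (⟪lam k i j + lam k j i, vstar i j⟫ + ‖vstar i j + v k j i‖ ^ 2))
          - (fp i (u (k+1) i) + fs i (vhat k i)
            + ∑ j ∈ Finset.univ.filter (fun j => Nbr i j),
                (⟪lam k i j + lam k j i, vhat k i j⟫ + ‖vhat k i j + v k j i‖ ^ 2))) := by
        nlinarith [hle, h1, h2]
      exact le_of_mul_le_mul_left h6 ht0
    -- Step 2: global strong-convexity inequality at the saddle point
    have hB : (∑ i, (m i / 2) * ‖u (k+1) i - ustar i‖ ^ 2)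
          + ∑ i, ∑ j ∈ Finset.univ.filter (fun j => Nbr i j),
              ‖vhat k i j + vhat k j i‖ ^ 2
        ≤ ((∑ i, (fp i (u (k+1) i) + fs i (vhat k i)))
            + ∑ i, ∑ j ∈ Finset.univ.filter (fun j => Nbr i j),
                (⟪lamstar i j, vhat k i j + vhat k j i⟫ + ‖vhat k i j + vhat k j i‖ ^ 2))
          - ∑ i, (fp i (ustar i) + fs i (vstar i)) := by
      refine adal_le_of_scaled _ _ ?_ ?_
      · have hq1 : 0 ≤ ∑ i, (m i / 2) * ‖u (k+1) i - ustar i‖ ^ 2 :=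
          Finset.sum_nonneg fun i _ => mul_nonneg (by linarith [hm i]) (by positivity)
        have hq2 : 0 ≤ ∑ i, ∑ j ∈ Finset.univ.filter (fun j => Nbr i j),
            ‖vhat k i j + vhat k j i‖ ^ 2 :=
          Finset.sum_nonneg fun i _ => Finset.sum_nonneg fun j _ => by positivity
        linarith
      intro t ht0 ht1
      have htt : (0:ℝ) ≤ 1 - t := by linarith
      have hmem : ∀ i, ((fun i => t • u (k+1) i + (1 - t) • ustar i) i,
          (fun i => t • vhat k i + (1 - t) • vstar i) i) ∈ C i := fun i =>
        hC_cvx i (hmin k i).1 (hfeas i) ht0.le htt (by ring)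
      have hle := hprimal _ _ hmem
      unfold augLagrangian at hle
      have hG0 : (∑ i, (fp i (ustar i) + fs i (vstar i) +
            ∑ j ∈ Finset.univ.filter (fun j => Nbr i j),
              (⟪lamstar i j, vstar i j + vstar j i⟫ + ‖vstar i j + vstar j i‖ ^ 2)))
          = ∑ i, (fp i (ustar i) + fs i (vstar i)) := by
        refine Finset.sum_congr rfl fun i _ => ?_
        have hz : ∑ j ∈ Finset.univ.filter (fun j => Nbr i j),
            (⟪lamstar i j, vstar i j + vstar j i⟫ + ‖vstar i j + vstar j i‖ ^ 2) = 0 :=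
          Finset.sum_eq_zero fun j hj => by
            rw [hstar i j (Finset.mem_filter.mp hj).2]; simp
        rw [hz, add_zero]
      rw [hG0] at hle
      -- per agent upper bound of the combined objective
      have hper : ∀ i : ι,
          fp i (t • u (k+1) i + (1 - t) • ustar i)
            + fs i (t • vhat k i + (1 - t) • vstar i)
            + ∑ j ∈ Finset.univ.filter (fun j => Nbr i j),
                (⟪lamstar i j, (fun i => t • vhat k i + (1 - t) • vstar i) i j
                    + (fun i => t • vhat k i + (1 - t) • vstar i) j i⟫
                  + ‖(fun i => t • vhat k i + (1 - t) • vstar i) i j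
                    + (fun i => t • vhat k i + (1 - t) • vstar i) j i‖ ^ 2)
          ≤ t * (fp i (u (k+1) i) + fs i (vhat k i)
              + ∑ j ∈ Finset.univ.filter (fun j => Nbr i j),
                  (⟪lamstar i j, vhat k i j + vhat k j i⟫ + ‖vhat k i j + vhat k j i‖ ^ 2))
            + (1 - t) * (fp i (ustar i) + fs i (vstar i))
            - t * (1 - t) * ((m i / 2) * ‖u (k+1) i - ustar i‖ ^ 2
              + ∑ j ∈ Finset.univ.filter (fun j => Nbr i j), ‖vhat k i j + vhat k j i‖ ^ 2) := by
        intro i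
        have h1 := (hfp_sc i).2 (Set.mem_univ (u (k+1) i)) (Set.mem_univ (ustar i))
          ht0.le htt (by ring)
        have h2 := (hfs_cvx i).2 (Set.mem_univ (vhat k i)) (Set.mem_univ (vstar i))
          ht0.le htt (by ring)
        simp only [smul_eq_mul] at h1 h2
        have h3 : ∑ j ∈ Finset.univ.filter (fun j => Nbr i j),
              (⟪lamstar i j, (fun i => t • vhat k i + (1 - t) • vstar i) i j
                  + (fun i => t • vhat k i + (1 - t) • vstar i) j i⟫
                + ‖(fun i => t • vhat k i + (1 - t) • vstar i) i j
                  + (fun i => t • vhat k i + (1 - t) • vstar i) j i‖ ^ 2)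
            = t * (∑ j ∈ Finset.univ.filter (fun j => Nbr i j),
                  (⟪lamstar i j, vhat k i j + vhat k j i⟫ + ‖vhat k i j + vhat k j i‖ ^ 2))
              - t * (1 - t) * ∑ j ∈ Finset.univ.filter (fun j => Nbr i j),
                  ‖vhat k i j + vhat k j i‖ ^ 2 := by
          rw [Finset.mul_sum, Finset.mul_sum, ← Finset.sum_sub_distrib]
          refine Finset.sum_congr rfl fun j hj => ?_
          have hij := (Finset.mem_filter.mp hj).2
          have hb : vstar j i = -vstar i j := eq_neg_of_add_eq_zero_right (hstar i j hij)
          have hedge : (fun i => t • vhat k i + (1 - t) • vstar i) i j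
              + (fun i => t • vhat k i + (1 - t) • vstar i) j i
              = t • (vhat k i j + vhat k j i) := by
            show t • vhat k i j + (1 - t) • vstar i j
                + (t • vhat k j i + (1 - t) • vstar j i) = _
            rw [hb]
            module
          rw [hedge, real_inner_smul_right, norm_smul, Real.norm_eq_abs, abs_of_nonneg ht0.le,
            mul_pow]
          ring
        rw [h3]
        linarith
      have hsum := Finset.sum_le_sum (fun i (_ : i ∈ (Finset.univ : Finset ι)) => hper i)
      have ecomb : ∑ i, (t * (fp i (u (k+1) i) + fs i (vhat k i)
              + ∑ j ∈ Finset.univ.filter (fun j => Nbr i j),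
                  (⟪lamstar i j, vhat k i j + vhat k j i⟫ + ‖vhat k i j + vhat k j i‖ ^ 2))
            + (1 - t) * (fp i (ustar i) + fs i (vstar i))
            - t * (1 - t) * ((m i / 2) * ‖u (k+1) i - ustar i‖ ^ 2
              + ∑ j ∈ Finset.univ.filter (fun j => Nbr i j), ‖vhat k i j + vhat k j i‖ ^ 2))
          = t * ((∑ i, (fp i (u (k+1) i) + fs i (vhat k i)))
              + ∑ i, ∑ j ∈ Finset.univ.filter (fun j => Nbr i j),
                  (⟪lamstar i j, vhat k i j + vhat k j i⟫ + ‖vhat k i j + vhat k j i‖ ^ 2))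
            + (1 - t) * (∑ i, (fp i (ustar i) + fs i (vstar i)))
            - t * (1 - t) * ((∑ i, (m i / 2) * ‖u (k+1) i - ustar i‖ ^ 2)
              + ∑ i, ∑ j ∈ Finset.univ.filter (fun j => Nbr i j),
                  ‖vhat k i j + vhat k j i‖ ^ 2) := by
        simp only [Finset.sum_add_distrib, Finset.sum_sub_distrib, ← Finset.mul_sum]
      rw [ecomb] at hsum
      have h6 : t * ((1 - t) * ((∑ i, (m i / 2) * ‖u (k+1) i - ustar i‖ ^ 2)
            + ∑ i, ∑ j ∈ Finset.univ.filter (fun j => Nbr i j),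
                ‖vhat k i j + vhat k j i‖ ^ 2))
          ≤ t * (((∑ i, (fp i (u (k+1) i) + fs i (vhat k i)))
            + ∑ i, ∑ j ∈ Finset.univ.filter (fun j => Nbr i j),
                (⟪lamstar i j, vhat k i j + vhat k j i⟫ + ‖vhat k i j + vhat k j i‖ ^ 2))
          - ∑ i, (fp i (ustar i) + fs i (vstar i))) := by
        nlinarith [hle, hsum]
      exact le_of_mul_le_mul_left h6 ht0
    -- Step 3: bound on the dual pairing
    have hC : ∑ i, ∑ j ∈ Finset.univ.filter (fun j => Nbr i j),
          ⟪vhat k i j + vhat k j i, lam k i j - lamstar i j⟫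
        ≤ - (∑ i, m i * ‖u (k + 1) i - ustar i‖ ^ 2)
          - ∑ i, ∑ j ∈ Finset.univ.filter (fun j => Nbr i j),
              (‖vhat k i j - vstar i j‖ ^ 2 + ‖vhat k i j + v k j i‖ ^ 2
                - ‖vstar i j + v k j i‖ ^ 2) := by
      have hAsum := Finset.sum_le_sum (fun i (_ : i ∈ (Finset.univ : Finset ι)) => hA i)
      have e1 : ∑ i, ((m i / 2) * ‖u (k+1) i - ustar i‖ ^ 2
            + ∑ j ∈ Finset.univ.filter (fun j => Nbr i j), ‖vhat k i j - vstar i j‖ ^ 2)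
          = (∑ i, (m i / 2) * ‖u (k+1) i - ustar i‖ ^ 2)
            + ∑ i, ∑ j ∈ Finset.univ.filter (fun j => Nbr i j),
                ‖vhat k i j - vstar i j‖ ^ 2 := Finset.sum_add_distrib
      have e2 : ∑ i, ((fp i (ustar i) + fs i (vstar i)
            + ∑ j ∈ Finset.univ.filter (fun j => Nbr i j),
                (⟪lam k i j + lam k j i, vstar i j⟫ + ‖vstar i j + v k j i‖ ^ 2))
          - (fp i (u (k+1) i) + fs i (vhat k i)
            + ∑ j ∈ Finset.univ.filter (fun j => Nbr i j),
                (⟪lam k i j + lam k j i, vhat k i j⟫ + ‖vhat k i j + v k j i‖ ^ 2)))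
          = ((∑ i, (fp i (ustar i) + fs i (vstar i)))
              + ((∑ i, ∑ j ∈ Finset.univ.filter (fun j => Nbr i j),
                  ⟪lam k i j + lam k j i, vstar i j⟫)
                + ∑ i, ∑ j ∈ Finset.univ.filter (fun j => Nbr i j),
                  ‖vstar i j + v k j i‖ ^ 2))
            - ((∑ i, (fp i (u (k+1) i) + fs i (vhat k i)))
              + ((∑ i, ∑ j ∈ Finset.univ.filter (fun j => Nbr i j),
                  ⟪lam k i j + lam k j i, vhat k i j⟫)
                + ∑ i, ∑ j ∈ Finset.univ.filter (fun j => Nbr i j),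
                  ‖vhat k i j + v k j i‖ ^ 2)) := by
        simp only [Finset.sum_add_distrib, Finset.sum_sub_distrib]
      rw [e1, e2] at hAsum
      have e3 : ∑ i, ∑ j ∈ Finset.univ.filter (fun j => Nbr i j),
            (⟪lamstar i j, vhat k i j + vhat k j i⟫ + ‖vhat k i j + vhat k j i‖ ^ 2)
          = (∑ i, ∑ j ∈ Finset.univ.filter (fun j => Nbr i j),
              ⟪lamstar i j, vhat k i j + vhat k j i⟫)
            + ∑ i, ∑ j ∈ Finset.univ.filter (fun j => Nbr i j),
              ‖vhat k i j + vhat k j i‖ ^ 2 := by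
        simp only [Finset.sum_add_distrib]
      rw [e3] at hB
      -- swap identity for the multipliers
      have hswap : (∑ i, ∑ j ∈ Finset.univ.filter (fun j => Nbr i j),
            ⟪lam k i j + lam k j i, vstar i j⟫)
          - (∑ i, ∑ j ∈ Finset.univ.filter (fun j => Nbr i j),
            ⟪lam k i j + lam k j i, vhat k i j⟫)
          = - ∑ i, ∑ j ∈ Finset.univ.filter (fun j => Nbr i j),
              ⟪lam k i j, vhat k i j + vhat k j i⟫ := by
        have s1 : (∑ i, ∑ j ∈ Finset.univ.filter (fun j => Nbr i j),
              ⟪lam k i j + lam k j i, vstar i j⟫)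
            - (∑ i, ∑ j ∈ Finset.univ.filter (fun j => Nbr i j),
              ⟪lam k i j + lam k j i, vhat k i j⟫)
            = (∑ i, ∑ j ∈ Finset.univ.filter (fun j => Nbr i j),
                ⟪lam k i j, vstar i j - vhat k i j⟫)
              + ∑ i, ∑ j ∈ Finset.univ.filter (fun j => Nbr i j),
                ⟪lam k j i, vstar i j - vhat k i j⟫ := by
          rw [← Finset.sum_sub_distrib, ← Finset.sum_add_distrib]
          refine Finset.sum_congr rfl fun i _ => ?_
          rw [← Finset.sum_sub_distrib, ← Finset.sum_add_distrib]
          refine Finset.sum_congr rfl fun j _ => ?_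
          rw [inner_sub_right, inner_sub_right, inner_add_left, inner_add_left]
          ring
        rw [s1, adal_swap_sum Nbr hsymm (fun i j => ⟪lam k j i, vstar i j - vhat k i j⟫)]
        have s2 : (∑ i, ∑ j ∈ Finset.univ.filter (fun j => Nbr i j),
              ⟪lam k i j, vstar i j - vhat k i j⟫)
            + (∑ i, ∑ j ∈ Finset.univ.filter (fun j => Nbr i j),
              ⟪lam k i j, vstar j i - vhat k j i⟫)
            = ∑ i, ∑ j ∈ Finset.univ.filter (fun j => Nbr i j),
              (- ⟪lam k i j, vhat k i j + vhat k j i⟫) := by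
          rw [← Finset.sum_add_distrib]
          refine Finset.sum_congr rfl fun i _ => ?_
          rw [← Finset.sum_add_distrib]
          refine Finset.sum_congr rfl fun j hj => ?_
          have hij := (Finset.mem_filter.mp hj).2
          have hb : vstar j i = -vstar i j := eq_neg_of_add_eq_zero_right (hstar i j hij)
          rw [← inner_add_right]
          have hv : (vstar i j - vhat k i j) + (vstar j i - vhat k j i)
              = -(vhat k i j + vhat k j i) := by rw [hb]; module
          rw [hv, inner_neg_right]
        rw [s2]
        simp [Finset.sum_neg_distrib]
      -- rewrite the target pairing
      have etarg : ∑ i, ∑ j ∈ Finset.univ.filter (fun j => Nbr i j),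
            ⟪vhat k i j + vhat k j i, lam k i j - lamstar i j⟫
          = (∑ i, ∑ j ∈ Finset.univ.filter (fun j => Nbr i j),
              ⟪lam k i j, vhat k i j + vhat k j i⟫)
            - ∑ i, ∑ j ∈ Finset.univ.filter (fun j => Nbr i j),
              ⟪lamstar i j, vhat k i j + vhat k j i⟫ := by
        rw [← Finset.sum_sub_distrib]
        refine Finset.sum_congr rfl fun i _ => ?_
        rw [← Finset.sum_sub_distrib]
        refine Finset.sum_congr rfl fun j _ => ?_
        rw [inner_sub_right, real_inner_comm (vhat k i j + vhat k j i) (lam k i j),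
          real_inner_comm (vhat k i j + vhat k j i) (lamstar i j)]
      have em : ∑ i, m i * ‖u (k + 1) i - ustar i‖ ^ 2
          = 2 * ∑ i, (m i / 2) * ‖u (k+1) i - ustar i‖ ^ 2 := by
        rw [Finset.mul_sum]
        exact Finset.sum_congr rfl fun i _ => by ring
      have etargsum : ∑ i, ∑ j ∈ Finset.univ.filter (fun j => Nbr i j),
            (‖vhat k i j - vstar i j‖ ^ 2 + ‖vhat k i j + v k j i‖ ^ 2
              - ‖vstar i j + v k j i‖ ^ 2)
          = (∑ i, ∑ j ∈ Finset.univ.filter (fun j => Nbr i j), ‖vhat k i j - vstar i j‖ ^ 2)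
            + (∑ i, ∑ j ∈ Finset.univ.filter (fun j => Nbr i j), ‖vhat k i j + v k j i‖ ^ 2)
            - ∑ i, ∑ j ∈ Finset.univ.filter (fun j => Nbr i j), ‖vstar i j + v k j i‖ ^ 2 := by
        simp only [Finset.sum_add_distrib, Finset.sum_sub_distrib]
      rw [etarg, etargsum, em]
      linarith
    -- Step 4: exact expression of the Lyapunov drift
    have hVd : V (k+1) - V k = ∑ i, ∑ j ∈ Finset.univ.filter (fun j => Nbr i j),
        (2*⟪vhat k i j - v k i j, v k i j - vstar i j⟫
          + η i j * ‖vhat k i j - v k i j‖^2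
          + (1 - η i j)*⟪vhat k i j + vhat k j i, v k i j + v k j i⟫
          + (η i j / 2)*‖vhat k i j + vhat k j i‖^2
          + ⟪vhat k i j + vhat k j i, lam k i j - lamstar i j⟫) := by
      rw [hV (k+1), hV k, ← Finset.sum_sub_distrib]
      refine Finset.sum_congr rfl fun i _ => ?_
      rw [← Finset.sum_sub_distrib]
      refine Finset.sum_congr rfl fun j hj => ?_
      have hij := (Finset.mem_filter.mp hj).2
      have hji := (hsymm i j).mp hij
      have hη0 := (hη i j hij).1
      have hηne : η i j ≠ 0 := ne_of_gt hη0
      have h1 : v (k+1) i j - vstar i j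
          = (v k i j - vstar i j) + η i j • (vhat k i j - v k i j) := by
        rw [hv_up k i j hij]; module
      have h2 : lamTilde (k+1) i j - lamstar i j
          = (lamTilde k i j - lamstar i j) + η i j • (vhat k i j + vhat k j i) := by
        rw [hlamTilde (k+1) i j hij, hlamTilde k i j hij, hlam_up k i j hij,
          hv_up k i j hij, hv_up k j i hji, ← hηsymm i j hij]
        module
      rw [h1, h2, adal_norm_add_smul, adal_norm_add_smul]
      have h3 : ⟪vhat k i j + vhat k j i, lamTilde k i j - lamstar i j⟫
          = ⟪vhat k i j + vhat k j i, lam k i j - lamstar i j⟫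
            + (1 - η i j)*⟪vhat k i j + vhat k j i, v k i j + v k j i⟫ := by
        rw [hlamTilde k i j hij]
        simp only [inner_sub_right, inner_add_right, real_inner_smul_right]
        ring
      rw [h3]
      field_simp
      ring
    -- Step 5: the symmetrized quadratic term is nonpositive
    have hW : (∑ i, ∑ j ∈ Finset.univ.filter (fun j => Nbr i j),
          (2*⟪vhat k i j - v k i j, v k i j - vstar i j⟫
            + η i j * ‖vhat k i j - v k i j‖^2
            + (1 - η i j)*⟪vhat k i j + vhat k j i, v k i j + v k j i⟫
            + (η i j / 2)*‖vhat k i j + vhat k j i‖^2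
            - (‖vhat k i j - vstar i j‖ ^ 2 + ‖vhat k i j + v k j i‖ ^ 2
                - ‖vstar i j + v k j i‖ ^ 2)
            + (3 / 2 - η i j) * ‖vhat k i j - v k i j‖ ^ 2
            + ((η i j - (2 * η i j) ^ 2) / 2) * ‖vhat k i j + vhat k j i‖ ^ 2)) ≤ 0 := by
      set Wf : ι → ι → ℝ := fun i j =>
        2*⟪vhat k i j - v k i j, v k i j - vstar i j⟫
          + η i j * ‖vhat k i j - v k i j‖^2
          + (1 - η i j)*⟪vhat k i j + vhat k j i, v k i j + v k j i⟫
          + (η i j / 2)*‖vhat k i j + vhat k j i‖^2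
          - (‖vhat k i j - vstar i j‖ ^ 2 + ‖vhat k i j + v k j i‖ ^ 2
              - ‖vstar i j + v k j i‖ ^ 2)
          + (3 / 2 - η i j) * ‖vhat k i j - v k i j‖ ^ 2
          + ((η i j - (2 * η i j) ^ 2) / 2) * ‖vhat k i j + vhat k j i‖ ^ 2 with hWf
      show (∑ i, ∑ j ∈ Finset.univ.filter (fun j => Nbr i j), Wf i j) ≤ 0
      have hsw := adal_swap_sum Nbr hsymm Wf
      have hmerge : (∑ i, ∑ j ∈ Finset.univ.filter (fun j => Nbr i j), Wf i j)
            + ∑ i, ∑ j ∈ Finset.univ.filter (fun j => Nbr i j), Wf j i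
          = ∑ i, ∑ j ∈ Finset.univ.filter (fun j => Nbr i j), (Wf i j + Wf j i) := by
        simp only [Finset.sum_add_distrib]
      have hpair : ∑ i, ∑ j ∈ Finset.univ.filter (fun j => Nbr i j), (Wf i j + Wf j i) ≤ 0 := by
        refine Finset.sum_nonpos fun i _ => Finset.sum_nonpos fun j hj => ?_
        have hij := (Finset.mem_filter.mp hj).2
        have hee : Wf i j + Wf j i
            = -(1/2)*‖(vhat k i j - v k i j) - (2*η i j) • (vhat k i j + vhat k j i)‖^2
              - (1/2)*‖(vhat k j i - v k j i) - (2*η i j) • (vhat k i j + vhat k j i)‖^2 := by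
          rw [hWf]
          simp only []
          rw [← hηsymm i j hij]
          have := adal_edge_id (v k i j) (v k j i) (vhat k i j) (vhat k j i)
            (vstar i j) (vstar j i) (η i j) (hstar i j hij)
          calc 2*⟪vhat k i j - v k i j, v k i j - vstar i j⟫
                + η i j * ‖vhat k i j - v k i j‖^2
                + (1 - η i j)*⟪vhat k i j + vhat k j i, v k i j + v k j i⟫
                + (η i j / 2)*‖vhat k i j + vhat k j i‖^2
                - (‖vhat k i j - vstar i j‖ ^ 2 + ‖vhat k i j + v k j i‖ ^ 2
                    - ‖vstar i j + v k j i‖ ^ 2)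
                + (3 / 2 - η i j) * ‖vhat k i j - v k i j‖ ^ 2
                + ((η i j - (2 * η i j) ^ 2) / 2) * ‖vhat k i j + vhat k j i‖ ^ 2
              + (2*⟪vhat k j i - v k j i, v k j i - vstar j i⟫
                + η i j * ‖vhat k j i - v k j i‖^2
                + (1 - η i j)*⟪vhat k j i + vhat k i j, v k j i + v k i j⟫
                + (η i j / 2)*‖vhat k j i + vhat k i j‖^2
                - (‖vhat k j i - vstar j i‖ ^ 2 + ‖vhat k j i + v k i j‖ ^ 2
                    - ‖vstar j i + v k i j‖ ^ 2)
                + (3 / 2 - η i j) * ‖vhat k j i - v k j i‖ ^ 2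
                + ((η i j - (2 * η i j) ^ 2) / 2) * ‖vhat k j i + vhat k i j‖ ^ 2)
              = (2*⟪vhat k i j - v k i j, v k i j - vstar i j⟫
                  + η i j*‖vhat k i j - v k i j‖^2
                  + (1-η i j)*⟪vhat k i j + vhat k j i, v k i j + v k j i⟫
                  + (η i j/2)*‖vhat k i j + vhat k j i‖^2
                  - (‖vhat k i j - vstar i j‖^2 + ‖vhat k i j + v k j i‖^2
                      - ‖vstar i j + v k j i‖^2)
                  + (3/2 - η i j)*‖vhat k i j - v k i j‖^2
                  + ((η i j - (2*η i j)^2)/2)*‖vhat k i j + vhat k j i‖^2)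
                + (2*⟪vhat k j i - v k j i, v k j i - vstar j i⟫
                  + η i j*‖vhat k j i - v k j i‖^2
                  + (1-η i j)*⟪vhat k j i + vhat k i j, v k j i + v k i j⟫
                  + (η i j/2)*‖vhat k j i + vhat k i j‖^2
                  - (‖vhat k j i - vstar j i‖^2 + ‖vhat k j i + v k i j‖^2
                      - ‖vstar j i + v k i j‖^2)
                  + (3/2 - η i j)*‖vhat k j i - v k j i‖^2
                  + ((η i j - (2*η i j)^2)/2)*‖vhat k j i + vhat k i j‖^2) := by ring
            _ = -(1/2)*‖(vhat k i j - v k i j) - (2*η i j) • (vhat k i j + vhat k j i)‖^2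
              - (1/2)*‖(vhat k j i - v k j i) - (2*η i j) • (vhat k i j + vhat k j i)‖^2 :=
              this
        rw [hee]
        have hn1 : (0:ℝ) ≤ ‖(vhat k i j - v k i j) - (2*η i j) • (vhat k i j + vhat k j i)‖^2 := by
          positivity
        have hn2 : (0:ℝ) ≤ ‖(vhat k j i - v k j i) - (2*η i j) • (vhat k i j + vhat k j i)‖^2 := by
          positivity
        linarith
      linarith [hsw, hmerge, hpair]
    -- final assembly
    have hVd2 := hVd
    rw [hVd]
    have esplitV : ∑ i, ∑ j ∈ Finset.univ.filter (fun j => Nbr i j),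
        (2*⟪vhat k i j - v k i j, v k i j - vstar i j⟫
          + η i j * ‖vhat k i j - v k i j‖^2
          + (1 - η i j)*⟪vhat k i j + vhat k j i, v k i j + v k j i⟫
          + (η i j / 2)*‖vhat k i j + vhat k j i‖^2
          + ⟪vhat k i j + vhat k j i, lam k i j - lamstar i j⟫)
        = (∑ i, ∑ j ∈ Finset.univ.filter (fun j => Nbr i j),
            (2*⟪vhat k i j - v k i j, v k i j - vstar i j⟫
              + η i j * ‖vhat k i j - v k i j‖^2
              + (1 - η i j)*⟪vhat k i j + vhat k j i, v k i j + v k j i⟫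
              + (η i j / 2)*‖vhat k i j + vhat k j i‖^2))
          + ∑ i, ∑ j ∈ Finset.univ.filter (fun j => Nbr i j),
              ⟪vhat k i j + vhat k j i, lam k i j - lamstar i j⟫ := by
      simp only [Finset.sum_add_distrib]
    have esplitW : ∑ i, ∑ j ∈ Finset.univ.filter (fun j => Nbr i j),
          (2*⟪vhat k i j - v k i j, v k i j - vstar i j⟫
            + η i j * ‖vhat k i j - v k i j‖^2
            + (1 - η i j)*⟪vhat k i j + vhat k j i, v k i j + v k j i⟫
            + (η i j / 2)*‖vhat k i j + vhat k j i‖^2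
            - (‖vhat k i j - vstar i j‖ ^ 2 + ‖vhat k i j + v k j i‖ ^ 2
                - ‖vstar i j + v k j i‖ ^ 2)
            + (3 / 2 - η i j) * ‖vhat k i j - v k i j‖ ^ 2
            + ((η i j - (2 * η i j) ^ 2) / 2) * ‖vhat k i j + vhat k j i‖ ^ 2)
        = (∑ i, ∑ j ∈ Finset.univ.filter (fun j => Nbr i j),
            (2*⟪vhat k i j - v k i j, v k i j - vstar i j⟫
              + η i j * ‖vhat k i j - v k i j‖^2
              + (1 - η i j)*⟪vhat k i j + vhat k j i, v k i j + v k j i⟫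
              + (η i j / 2)*‖vhat k i j + vhat k j i‖^2))
          - (∑ i, ∑ j ∈ Finset.univ.filter (fun j => Nbr i j),
              (‖vhat k i j - vstar i j‖ ^ 2 + ‖vhat k i j + v k j i‖ ^ 2
                - ‖vstar i j + v k j i‖ ^ 2))
          + (∑ i, ∑ j ∈ Finset.univ.filter (fun j => Nbr i j),
              (3 / 2 - η i j) * ‖vhat k i j - v k i j‖ ^ 2)
          + ∑ i, ∑ j ∈ Finset.univ.filter (fun j => Nbr i j),
              ((η i j - (2 * η i j) ^ 2) / 2) * ‖vhat k i j + vhat k j i‖ ^ 2 := by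
      simp only [Finset.sum_add_distrib, Finset.sum_sub_distrib]
    rw [esplitV]
    rw [esplitW] at hW
    linarith [hC, hW]
  refine ⟨fun k => ?_, key⟩
  have h := key k
  have h1 : 0 ≤ ∑ i, m i * ‖u (k + 1) i - ustar i‖ ^ 2 :=
    Finset.sum_nonneg fun i _ => mul_nonneg (hm i).le (by positivity)
  have h2 : 0 ≤ ∑ i, ∑ j ∈ Finset.univ.filter (fun j => Nbr i j),
      (3 / 2 - η i j) * ‖vhat k i j - v k i j‖ ^ 2 := by
    refine Finset.sum_nonneg fun i _ => Finset.sum_nonneg fun j hj => ?_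
    have hij := (Finset.mem_filter.mp hj).2
    have h4 := (hη i j hij).2
    have h5 : (0:ℝ) ≤ 3/2 - η i j := by linarith
    exact mul_nonneg h5 (by positivity)
  have h3 : 0 ≤ ∑ i, ∑ j ∈ Finset.univ.filter (fun j => Nbr i j),
      ((η i j - (2 * η i j) ^ 2) / 2) * ‖vhat k i j + vhat k j i‖ ^ 2 := by
    refine Finset.sum_nonneg fun i _ => Finset.sum_nonneg fun j hj => ?_
    have hij := (Finset.mem_filter.mp hj).2
    obtain ⟨h4, h5⟩ := hη i j hij
    have h6 : (0:ℝ) ≤ (η i j - (2 * η i j) ^ 2) / 2 := by nlinarith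
    exact mul_nonneg h6 (by positivity)
  linarith
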